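/- Let θ ∈ ℂ⁴, let (i,j,k) be a cyclic permutation of (1,2,3), and let δ ∈ {1,−1}. (a) If x ∈ ℂ³ satisfies x_i = 2δ, y_j(x,θ) = 0 and y_k(x,θ) = 0, then θ_k = δθ_j and x_j + δx_k = θ_j/2; conversely, if θ_k = δθ_j, then every x ∈ ℂ³ with x_i = 2δ and x_j + δx_k = θ_j/2 satisfies y_j(x,θ) = 0 and y_k(x,θ) = 0. (b) Assume θ_k = δθ_j and let ℓ_j^δ = {x ∈ ℂ³ : x_i = 2δ, x_j + δx_k = θ_j/2}. Then ℓ_j^δ ⊆ S(θ) (equivalently, ℓ_j^δ is contained in the fixed-point set of g_j²) if and only if s = 2δ is a multiple root of the quartic Q(s), i.e. Q(2δ) = 0 and Q′(2δ) = 0. -/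

import Mathlib

/-- The quartic polynomial attached to `θ` and the cyclic permutation `(i,j,k)`. -/
noncomputable def quartic (θi θj θk θ4 : ℂ) : ℂ → ℂ :=
  fun s => s ^ 4 - θi * s ^ 3 + (θ4 - 4) * s ^ 2 + (4 * θi - θj * θk) * s
    + θj ^ 2 + θk ^ 2 - 4 * θ4

/-- The quartic has the expected derivative. -/
lemma quartic_hasDerivAt (a b c e s : ℂ) :
    HasDerivAt (quartic a b c e)
      (4 * s ^ 3 - 3 * a * s ^ 2 + 2 * (e - 4) * s + (4 * a - b * c)) s := by
  have h := ((((((hasDerivAt_pow 4 s).sub ((hasDerivAt_pow 3 s).const_mul a)).add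
      ((hasDerivAt_pow 2 s).const_mul (e - 4))).add
      ((hasDerivAt_id s).const_mul (4 * a - b * c))).add_const (b ^ 2)).add_const
      (c ^ 2)).sub_const (4 * e)
  refine HasDerivAt.congr_deriv h ?_
  push_cast
  ring

/-- Explicit formula for the derivative of the quartic. -/
lemma quartic_deriv (a b c e s : ℂ) :
    deriv (quartic a b c e) s
      = 4 * s ^ 3 - 3 * a * s ^ 2 + 2 * (e - 4) * s + (4 * a - b * c) :=
  (quartic_hasDerivAt a b c e s).deriv

/-- (a) Points with `x_i = 2δ` and `y_j = y_k = 0` satisfy `θ_k = δθ_j` and lie on the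
line `x_j + δx_k = θ_j/2`, and conversely if `θ_k = δθ_j` every point of that line with
`x_i = 2δ` satisfies `y_j = y_k = 0`.
(b) Assuming `θ_k = δθ_j`, the line `ℓ_j^δ` is contained in `S(θ)` if and only if
`s = 2δ` is a multiple root of the quartic. -/
theorem line_component_criterion
    (θi θj θk θ4 δ : ℂ) (hδ : δ = 1 ∨ δ = -1) :
    (∀ xj xk : ℂ,
        2 * xj + xk * (2 * δ) - θj = 0 → 2 * xk + (2 * δ) * xj - θk = 0 →
        θk = δ * θj ∧ xj + δ * xk = θj / 2) ∧
    (θk = δ * θj → ∀ xj xk : ℂ, xj + δ * xk = θj / 2 →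
        2 * xj + xk * (2 * δ) - θj = 0 ∧ 2 * xk + (2 * δ) * xj - θk = 0) ∧
    (θk = δ * θj →
      ((∀ xj xk : ℂ, xj + δ * xk = θj / 2 →
          (2 * δ) * xj * xk + (2 * δ) ^ 2 + xj ^ 2 + xk ^ 2
            - θi * (2 * δ) - θj * xj - θk * xk + θ4 = 0) ↔
        (quartic θi θj θk θ4 (2 * δ) = 0 ∧ deriv (quartic θi θj θk θ4) (2 * δ) = 0))) := by
  have hd2 : δ ^ 2 = 1 := by rcases hδ with h | h <;> rw [h] <;> ring
  refine ⟨?_, ?_, ?_⟩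
  · intro xj xk h1 h2
    constructor
    · linear_combination δ * h1 - h2 - 2 * xk * hd2
    · linear_combination h1 / 2
  · intro hk xj xk hline
    constructor
    · linear_combination 2 * hline
    · linear_combination 2 * δ * hline - hk - 2 * xk * hd2
  · intro hk
    rw [quartic_deriv]
    subst hk
    rcases hδ with rfl | rfl
    · constructor
      · intro h
        have E0 := h 0 (θj / 2) (by ring)
        refine ⟨by simp only [quartic]; ring, by linear_combination 4 * E0⟩
      · rintro ⟨hQ, hQ'⟩ xj xk hline
        linear_combination (xj + xk - θj / 2) * hline + hQ' / 4
    · constructor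
      · intro h
        have E0 := h 0 (-(θj / 2)) (by ring)
        refine ⟨by simp only [quartic]; ring, by linear_combination (-4) * E0⟩
      · rintro ⟨hQ, hQ'⟩ xj xk hline
        linear_combination (xj - xk - θj / 2) * hline - hQ' / 4
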